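/- arXiv:2411.04846 — 3 statements merged into one kernel-verified Lean document; each statement's English description precedes it below -/
import Mathlib

section
/- If a connected graph G has diameter at least 3, then in any graph obtained from G by a minimal sequence of vertex splits resulting in a disjoint union of 2-clubs, at least one vertex lying on a geodesic of length 3 in G (one of the two interior vertices) must be split. -/
open SimpleGraph

/-- `H` is obtained from `G` by splitting vertex `v` into two copies `v` and `v'`
(where `v'` was an isolated vertex), with `N(v₁) ∪ N(v₂) = N(v)`. -/
def IsSplitAt {V : Type*} (v v' : V) (G H : SimpleGraph V) : Prop :=
  v ≠ v' ∧ G.neighborSet v' = ∅ ∧ ¬ H.Adj v v' ∧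
  (∀ x y : V, x ≠ v → x ≠ v' → y ≠ v → y ≠ v' → (H.Adj x y ↔ G.Adj x y)) ∧
  (∀ x : V, x ≠ v → x ≠ v' → ((H.Adj v x ∨ H.Adj v' x) ↔ G.Adj v x))

/-- `H` is obtained from `G` by a single vertex split. -/
def IsSplit {V : Type*} (G H : SimpleGraph V) : Prop :=
  ∃ v v', IsSplitAt v v' G H

/-- `H` is obtained from `G` by deleting a single (existing) edge. -/
def IsEdgeDeletion {V : Type*} (G H : SimpleGraph V) : Prop :=
  ∃ u v : V, G.Adj u v ∧ H = G.deleteEdges {s(u, v)}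

/-- Editing operations: edge deletion, or vertex split (recording the split vertex
and the name of the new copy). -/
inductive Op where
  | del : ℕ → ℕ → Op
  | split : ℕ → ℕ → Op

/-- Semantics of one operation. -/
def OpApplies : Op → SimpleGraph ℕ → SimpleGraph ℕ → Prop
  | Op.del u v, G, H => G.Adj u v ∧ H = G.deleteEdges {s(u, v)}
  | Op.split v v', G, H => IsSplitAt v v' G H

/-- Applying a list of operations in order. -/
def OpsApply : List Op → SimpleGraph ℕ → SimpleGraph ℕ → Prop
  | [], G, H => H = G
  | o :: l, G, H => ∃ G', OpApplies o G G' ∧ OpsApply l G' H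

def IsSplitOp : Op → Prop
  | Op.split _ _ => True
  | Op.del _ _ => False

/-- The set of vertices on which a split is performed in the list of operations. -/
def splitVerts (l : List Op) : Set ℕ := {v | ∃ v', Op.split v v' ∈ l}

/-- `G` is a disjoint union of 2-clubs: within each connected component all
distances are at most 2. -/
def Is2ClubGraph (G : SimpleGraph ℕ) : Prop :=
  ∀ u v : ℕ, G.Reachable u v → G.dist u v ≤ 2

/-- Minimum number of vertex splits turning `G` into a disjoint union of 2-clubs. -/
noncomputable def twoCcvs (G : SimpleGraph ℕ) : ℕ :=
  sInf {k | ∃ l H, l.length = k ∧ (∀ o ∈ l, IsSplitOp o) ∧ OpsApply l G H ∧ Is2ClubGraph H}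

/-- Minimum number of edge deletions and vertex splits turning `G` into a
disjoint union of 2-clubs. -/
noncomputable def twoCcedvs (G : SimpleGraph ℕ) : ℕ :=
  sInf {k | ∃ l H, l.length = k ∧ OpsApply l G H ∧ Is2ClubGraph H}

/-- The subgraph of `G` induced on `s` (kept on the same vertex type, all
vertices outside `s` becoming isolated). -/
def inducedOn (G : SimpleGraph ℕ) (s : Set ℕ) : SimpleGraph ℕ where
  Adj x y := G.Adj x y ∧ x ∈ s ∧ y ∈ s
  symm := ⟨fun x y h => ⟨h.1.symm, h.2.2, h.2.1⟩⟩
  loopless := ⟨fun x h => G.loopless.irrefl x h.1⟩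

/-- The set `s` induces a 2-club in `G` (connected, diameter at most 2). -/
def Inducing2Club (G : SimpleGraph ℕ) (s : Set ℕ) : Prop :=
  ∀ u ∈ s, ∀ v ∈ s, (inducedOn G s).Reachable u v ∧ (inducedOn G s).dist u v ≤ 2

/-- The path with vertices `0, 1, …, m` (length `m`). -/
def pathG (m : ℕ) : SimpleGraph ℕ :=
  SimpleGraph.fromRel (fun i j => j = i + 1 ∧ j ≤ m)

/-- The cycle with vertices `0, 1, …, n-1`. -/
def cycleG (n : ℕ) : SimpleGraph ℕ :=
  SimpleGraph.fromRel (fun i j => i < n ∧ j = (i + 1) % n)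


private lemma suffix_walk {V : Type*} {G : SimpleGraph V} :
    ∀ {x y : V} (p : G.Walk x y) (i : ℕ),
      ∃ q : G.Walk (p.getVert i) y, q.length = p.length - i := by
  intro x y p
  induction p with
  | nil => intro i; exact ⟨SimpleGraph.Walk.nil, by simp⟩
  | cons h p ih =>
    intro i
    cases i with
    | zero => exact ⟨SimpleGraph.Walk.cons h p, by rw [Nat.sub_zero]; rfl⟩
    | succ j =>
      obtain ⟨q, hq⟩ := ih j
      exact ⟨q, by simpa using hq⟩

private lemma key_hom :
    ∀ (l : List Op) (G H : SimpleGraph ℕ) (u v : ℕ),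
      (∀ o ∈ l, IsSplitOp o) → OpsApply l G H → G.Adj u v →
      u ∉ splitVerts l → v ∉ splitVerts l →
      ∃ Φ : ℕ → ℕ,
        (∀ a b, H.Adj a b → G.Adj (Φ a) (Φ b)) ∧
        (∀ b, G.Adj b u → ∃ c, H.Adj c u ∧ Φ c = b) ∧
        (∀ b, G.Adj v b → ∃ c, H.Adj v c ∧ Φ c = b) ∧
        H.Adj u v := by
  intro l
  induction l with
  | nil =>
    intro G H u v _ happ huv _ _
    cases happ
    exact ⟨id, fun a b h => h, fun b h => ⟨b, h, rfl⟩, fun b h => ⟨b, h, rfl⟩, huv⟩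
  | cons o t ih =>
    intro G H u v hops happ huv hu hv
    obtain ⟨G', hop, happ'⟩ := happ
    cases o with
    | del a b => exact absurd (hops _ (List.mem_cons_self)) (by simp [IsSplitOp])
    | split w w' =>
      obtain ⟨hww', hempty, hnadj, h4, h5⟩ := hop
      have hwu : w ≠ u := fun h => hu ⟨w', by rw [h] at *; exact List.mem_cons_self⟩
      have hwv : w ≠ v := fun h => hv ⟨w', by rw [h] at *; exact List.mem_cons_self⟩
      have hw'nadj : ∀ z, ¬ G.Adj w' z := fun z hz => by
        have : z ∈ G.neighborSet w' := hz
        rw [hempty] at this; exact this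
      have hw'u : w' ≠ u := fun h => hw'nadj v (h ▸ huv)
      have hw'v : w' ≠ v := fun h => hw'nadj u (h ▸ huv.symm)
      have huv' : G'.Adj u v :=
        (h4 u v (Ne.symm hwu) (Ne.symm hw'u) (Ne.symm hwv) (Ne.symm hw'v)).mpr huv
      have hut : u ∉ splitVerts t := fun ⟨c, hc⟩ => hu ⟨c, List.mem_cons_of_mem _ hc⟩
      have hvt : v ∉ splitVerts t := fun ⟨c, hc⟩ => hv ⟨c, List.mem_cons_of_mem _ hc⟩
      obtain ⟨Φ, hhom, hliftU, hliftV, hadj⟩ :=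
        ih G' H u v (fun o ho => hops o (List.mem_cons_of_mem _ ho)) happ' huv' hut hvt
      set φ : ℕ → ℕ := fun a => if a = w' then w else a with hφ
      have hstep : ∀ p q, G'.Adj p q → G.Adj (φ p) (φ q) := by
        have main : ∀ q, q ≠ w → q ≠ w' → ∀ p, G'.Adj p q → G.Adj (φ p) (φ q) := by
          intro q hqw hq p hpq
          rcases eq_or_ne p w' with hp | hp
          · subst hp
            have := (h5 q hqw hq).mp (Or.inr hpq)
            simpa [hφ, hq, hqw] using this
          · rcases eq_or_ne p w with hpw | hpw
            · subst hpw
              have := (h5 q hqw hq).mp (Or.inl hpq)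
              simpa [hφ, hp, hq, hqw, hww'] using this
            · have := (h4 p q hpw hp hqw hq).mp hpq
              simpa [hφ, hp, hq] using this
        intro p q hpq
        rcases eq_or_ne q w' with hq | hq
        · have hpq' : G'.Adj p w' := hq ▸ hpq
          rcases eq_or_ne p w with hpw | hpw
          · rw [hpw] at hpq'; exact absurd hpq' hnadj
          · rcases eq_or_ne p w' with hp | hp
            · rw [hp] at hpq'; exact absurd hpq' (G'.loopless.irrefl _)
            · have hG := (h5 p hpw hp).mp (Or.inr hpq'.symm)
              simpa [hφ, hq, hp] using hG.symm
        · rcases eq_or_ne q w with hqw | hqw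
          · have hpq' : G'.Adj p w := hqw ▸ hpq
            rcases eq_or_ne p w' with hp | hp
            · rw [hp] at hpq'; exact absurd hpq'.symm hnadj
            · rcases eq_or_ne p w with hpw | hpw
              · rw [hpw] at hpq'; exact absurd hpq' (G'.loopless.irrefl _)
              · have hG := (h5 p hpw hp).mp (Or.inl hpq'.symm)
                simpa [hφ, hqw, hp, hww'] using hG.symm
          · exact main q hqw hq p hpq
      refine ⟨φ ∘ Φ, fun a b h => hstep _ _ (hhom a b h), ?_, ?_, hadj⟩
      · intro b hb
        have hbw' : b ≠ w' := fun h => hw'nadj u (h ▸ hb)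
        by_cases hbw : b = w
        · subst hbw
          rcases (h5 u (Ne.symm hwu) (Ne.symm hw'u)).mpr hb with h | h
          · obtain ⟨c, hc, hΦ⟩ := hliftU _ h
            exact ⟨c, hc, by simp [hφ, hΦ, hww']⟩
          · obtain ⟨c, hc, hΦ⟩ := hliftU _ h
            exact ⟨c, hc, by simp [hφ, hΦ]⟩
        · have hG' : G'.Adj b u := (h4 b u hbw hbw' (Ne.symm hwu) (Ne.symm hw'u)).mpr hb
          obtain ⟨c, hc, hΦ⟩ := hliftU _ hG'
          exact ⟨c, hc, by simp [hφ, hΦ, hbw']⟩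
      · intro b hb
        have hbw' : b ≠ w' := fun h => hw'nadj v (h ▸ hb.symm)
        by_cases hbw : b = w
        · subst hbw
          rcases (h5 v (Ne.symm hwv) (Ne.symm hw'v)).mpr hb.symm with h | h
          · obtain ⟨c, hc, hΦ⟩ := hliftV _ h.symm
            exact ⟨c, hc, by simp [hφ, hΦ, hww']⟩
          · obtain ⟨c, hc, hΦ⟩ := hliftV _ h.symm
            exact ⟨c, hc, by simp [hφ, hΦ]⟩
        · have hG' : G'.Adj v b := (h4 v b (Ne.symm hwv) (Ne.symm hw'v) hbw hbw').mpr hb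
          obtain ⟨c, hc, hΦ⟩ := hliftV _ hG'
          exact ⟨c, hc, by simp [hφ, hΦ, hbw']⟩

theorem stmt13 (G : SimpleGraph ℕ) (hfin : G.support.Finite)
    (hconn : (G.induce G.support).Connected)
    (hdiam : ∃ x y : ℕ, G.Reachable x y ∧ 3 ≤ G.dist x y)
    (l : List Op) (H : SimpleGraph ℕ) (hops : ∀ o ∈ l, IsSplitOp o)
    (happ : OpsApply l G H) (h2 : Is2ClubGraph H)
    (hmin : ∀ (l' : List Op) (H' : SimpleGraph ℕ), l'.Sublist l → l'.length < l.length →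
      OpsApply l' G H' → ¬ Is2ClubGraph H') :
    ∃ x u v y : ℕ, G.Adj x u ∧ G.Adj u v ∧ G.Adj v y ∧ G.dist x y = 3 ∧
      (u ∈ splitVerts l ∨ v ∈ splitVerts l) := by
  obtain ⟨x0, y0, hr, hd⟩ := hdiam
  obtain ⟨p, hp⟩ := hr.exists_walk_length_eq_dist
  have hlen : 3 ≤ p.length := by omega
  set u := p.getVert 1 with hu
  set v := p.getVert 2 with hv
  set y := p.getVert 3 with hy
  have h1 : G.Adj x0 u := by
    have := p.adj_getVert_succ (show 0 < p.length by omega)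
    simpa [SimpleGraph.Walk.getVert_zero] using this
  have h2' : G.Adj u v := p.adj_getVert_succ (by omega)
  have h3 : G.Adj v y := p.adj_getVert_succ (by omega)
  have hle3 : G.dist x0 y ≤ 3 := by
    have := SimpleGraph.dist_le (SimpleGraph.Walk.cons h1 (SimpleGraph.Walk.cons h2' h3.toWalk))
    simpa using this
  obtain ⟨q0, hq0⟩ := suffix_walk p 3
  have hd3 : G.dist x0 y = 3 := by
    obtain ⟨r, hr3⟩ := (SimpleGraph.Walk.reachable
      (SimpleGraph.Walk.cons h1 (SimpleGraph.Walk.cons h2' h3.toWalk))).exists_walk_length_eq_dist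
    have hub : G.dist x0 y0 ≤ (r.append q0).length := SimpleGraph.dist_le _
    rw [SimpleGraph.Walk.length_append] at hub
    omega
  refine ⟨x0, u, v, y, h1, h2', h3, hd3, ?_⟩
  by_contra hc
  push_neg at hc
  obtain ⟨Φ, hhom, hliftU, hliftV, hadjH⟩ :=
    key_hom l G H u v hops happ h2' hc.1 hc.2
  obtain ⟨xh, hxh, hΦx⟩ := hliftU x0 h1
  obtain ⟨yh, hyh, hΦy⟩ := hliftV y h3
  have hreach : H.Reachable xh yh :=
    SimpleGraph.Walk.reachable (SimpleGraph.Walk.cons hxh (SimpleGraph.Walk.cons hadjH hyh.toWalk))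
  have hdH : H.dist xh yh ≤ 2 := h2 xh yh hreach
  obtain ⟨q, hq⟩ := hreach.exists_walk_length_eq_dist
  let f : H →g G := ⟨Φ, fun {a b} h => hhom a b h⟩
  have hmap : G.dist (Φ xh) (Φ yh) ≤ (q.map f).length := SimpleGraph.dist_le _
  rw [SimpleGraph.Walk.length_map] at hmap
  rw [show Φ xh = x0 from hΦx, show Φ yh = y from hΦy] at hmap
  omega
end

section
/- If a class of graphs admits a polynomial-time algorithm computing 2ccvs exactly, then 2ccvs provides a factor-2 approximation of 2ccedvs on that class: for every graph G, 2ccedvs(G) ≤ 2ccvs(G) ≤ 2 · 2ccedvs(G), so outputting the split-only optimum approximates the mixed optimum within factor 2. -/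
open SimpleGraph

/- auxiliary material -/
def opVerts : Op → Finset ℕ
  | Op.del u v => {u, v}
  | Op.split v v' => {v, v'}

def vertsL : List Op → Finset ℕ
  | [] => ∅
  | o :: l => opVerts o ∪ vertsL l

lemma not_adj_of_not_mem_support {G : SimpleGraph ℕ} {x : ℕ} (h : x ∉ G.support) (y : ℕ) :
    ¬ G.Adj x y := fun ha => h (G.mem_support.2 ⟨y, ha⟩)

lemma not_adj_of_not_mem_support' {G : SimpleGraph ℕ} {x : ℕ} (h : x ∉ G.support) (y : ℕ) :
    ¬ G.Adj y x := fun ha => not_adj_of_not_mem_support h y ha.symm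

/-- the extra edge graph -/
def K2 (a b : ℕ) : SimpleGraph ℕ where
  Adj x y := x ≠ y ∧ ((x = a ∧ y = b) ∨ (x = b ∧ y = a))
  symm := ⟨by rintro x y ⟨hxy, h | h⟩ <;> exact ⟨Ne.symm hxy, by tauto⟩⟩
  loopless := ⟨fun x h => h.1 rfl⟩

lemma K2_support {a b : ℕ} {x : ℕ} (h : x ∈ (K2 a b).support) : x = a ∨ x = b := by
  obtain ⟨y, hy⟩ := (K2 a b).mem_support.1 h
  rcases hy.2 with ⟨h1, _⟩ | ⟨h1, _⟩ <;> tauto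

lemma split_support {v v' : ℕ} {G H : SimpleGraph ℕ} (h : IsSplitAt v v' G H) :
    H.support ⊆ G.support ∪ {v, v'} := by
  obtain ⟨hne, hiso, hnadj, hout, hin⟩ := h
  intro x hx
  obtain ⟨y, hy⟩ := H.mem_support.1 hx
  by_cases hxv : x = v; · right; exact Or.inl hxv
  by_cases hxv' : x = v'; · right; exact Or.inr hxv'
  left
  by_cases hyv : y = v
  · subst hyv
    exact G.mem_support.2 ⟨y, ((hin x hxv hxv').1 (Or.inl hy.symm)).symm⟩
  by_cases hyv' : y = v'
  · subst hyv'
    exact G.mem_support.2 ⟨v, ((hin x hxv hxv').1 (Or.inr hy.symm)).symm⟩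
  · exact G.mem_support.2 ⟨y, (hout x y hxv hxv' hyv hyv').1 hy⟩

lemma opsApply_support : ∀ (l : List Op) (G H : SimpleGraph ℕ), OpsApply l G H →
    H.support ⊆ G.support ∪ ↑(vertsL l) := by
  intro l
  induction l with
  | nil => intro G H h; cases h; intro x hx; exact Or.inl hx
  | cons o l ih =>
    intro G H h
    obtain ⟨G', ho, hl⟩ := h
    have h2 := ih G' H hl
    intro x hx
    rcases h2 hx with hx' | hx'
    · cases o with
      | del u v =>
        obtain ⟨_, rfl⟩ := ho
        left
        obtain ⟨y, hy⟩ := (SimpleGraph.mem_support _).1 hx'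
        exact G.mem_support.2 ⟨y, ((G.deleteEdges_adj).1 hy).1⟩
      | split v v' =>
        rcases split_support ho hx' with h' | h'
        · exact Or.inl h'
        · right
          simp only [vertsL, opVerts, Finset.coe_union, Set.mem_union, Finset.coe_insert,
            Finset.coe_singleton, Set.mem_insert_iff, Set.mem_singleton_iff] at *
          tauto
    · right
      simp only [vertsL, Finset.coe_union, Set.mem_union]
      exact Or.inr hx'

lemma opsApply_support_finite : ∀ (l : List Op) (G H : SimpleGraph ℕ), OpsApply l G H →
    G.support.Finite → H.support.Finite := by
  intro l G H h hfin
  exact Set.Finite.subset (hfin.union (vertsL l).finite_toSet) (opsApply_support l G H h)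

/-- lifting a sequence of operations along a disjoint extra graph K -/
lemma opsApply_lift : ∀ (l : List Op) (G H K : SimpleGraph ℕ), OpsApply l G H →
    (∀ x ∈ K.support, x ∉ G.support ∧ x ∉ vertsL l) →
    OpsApply l (G ⊔ K) (H ⊔ K) := by
  intro l
  induction l with
  | nil => intro G H K h _; cases h; rfl
  | cons o l ih =>
    intro G H K h hK
    obtain ⟨G', ho, hl⟩ := h
    have hG'supp : G'.support ⊆ G.support ∪ ↑(opVerts o) := by
      cases o with
      | del u v =>
        obtain ⟨_, rfl⟩ := ho
        intro x hx
        obtain ⟨y, hy⟩ := SimpleGraph.mem_support _ |>.1 hx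
        exact Or.inl (G.mem_support.2 ⟨y, ((G.deleteEdges_adj).1 hy).1⟩)
      | split v v' =>
        intro x hx
        rcases split_support ho hx with h' | h'
        · exact Or.inl h'
        · right; simpa [opVerts] using h'
    have hKtail : ∀ x ∈ K.support, x ∉ G'.support ∧ x ∉ vertsL l := by
      intro x hx
      obtain ⟨h1, h2⟩ := hK x hx
      constructor
      · intro hx'
        rcases hG'supp hx' with h' | h'
        · exact h1 h'
        · exact h2 (by simp [vertsL]; left; exact_mod_cast h')
      · intro hx'
        exact h2 (by simp [vertsL]; right; exact hx')
    refine ⟨G' ⊔ K, ?_, ih G' H K hl hKtail⟩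
    have hKnot : ∀ x ∈ (opVerts o : Finset ℕ), x ∉ K.support := by
      intro x hx hxK
      exact (hK x hxK).2 (by simp [vertsL]; left; exact hx)
    cases o with
    | del u v =>
      obtain ⟨hadj, rfl⟩ := ho
      have hu : u ∉ K.support := hKnot u (by simp [opVerts])
      have hv : v ∉ K.support := hKnot v (by simp [opVerts])
      refine ⟨Or.inl hadj, ?_⟩
      ext x y
      simp only [SimpleGraph.sup_adj, SimpleGraph.deleteEdges_adj, Set.mem_singleton_iff]
      constructor
      · rintro (⟨h1, h2⟩ | h1)
        · exact ⟨Or.inl h1, h2⟩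
        · refine ⟨Or.inr h1, ?_⟩
          intro he
          rcases Sym2.eq_iff.1 he with ⟨rfl, rfl⟩ | ⟨rfl, rfl⟩
          · exact hu (K.mem_support.2 ⟨y, h1⟩)
          · exact hv (K.mem_support.2 ⟨y, h1⟩)
      · rintro ⟨h1 | h1, h2⟩
        · exact Or.inl ⟨h1, h2⟩
        · exact Or.inr h1
    | split v v' =>
      obtain ⟨hne, hiso, hnadj, hout, hin⟩ := ho
      have hv : v ∉ K.support := hKnot v (by simp [opVerts])
      have hv' : v' ∉ K.support := hKnot v' (by simp [opVerts])
      refine ⟨hne, ?_, ?_, ?_, ?_⟩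
      · ext y
        simp only [SimpleGraph.mem_neighborSet, SimpleGraph.sup_adj, Set.mem_empty_iff_false,
          iff_false]
        rintro (h | h)
        · exact (Set.eq_empty_iff_forall_notMem.1 hiso y) h
        · exact not_adj_of_not_mem_support hv' y h
      · rintro (h | h)
        · exact hnadj h
        · exact not_adj_of_not_mem_support hv v' h
      · intro x y hxv hxv' hyv hyv'
        simp only [SimpleGraph.sup_adj]
        rw [hout x y hxv hxv' hyv hyv']
      · intro x hxv hxv'
        simp only [SimpleGraph.sup_adj]
        have h1 : ¬ K.Adj v x := not_adj_of_not_mem_support hv x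
        have h2 : ¬ K.Adj v' x := not_adj_of_not_mem_support hv' x
        constructor
        · rintro ((h | h) | (h | h))
          · exact Or.inl ((hin x hxv hxv').1 (Or.inl h))
          · exact absurd h h1
          · exact Or.inl ((hin x hxv hxv').1 (Or.inr h))
          · exact absurd h h2
        · rintro (h | h)
          · rcases (hin x hxv hxv').2 h with h' | h'
            · exact Or.inl (Or.inl h')
            · exact Or.inr (Or.inl h')
          · exact absurd h h1

/-- a walk in `H ⊔ K2 a b` starting outside `{a,b}` stays in `H` -/
lemma walk_stay {H : SimpleGraph ℕ} {a b : ℕ} (ha : a ∉ H.support) (hb : b ∉ H.support) :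
    ∀ {u v : ℕ}, (H ⊔ K2 a b).Walk u v → u ≠ a → u ≠ b →
      H.Reachable u v ∧ v ≠ a ∧ v ≠ b := by
  intro u v p
  induction p with
  | nil => intro h1 h2; exact ⟨SimpleGraph.Reachable.refl _, h1, h2⟩
  | @cons x y z hadj p ih =>
    intro h1 h2
    have hH : H.Adj x y := by
      rcases hadj with h | h
      · exact h
      · rcases h.2 with ⟨rfl, rfl⟩ | ⟨rfl, rfl⟩
        · exact absurd rfl h1
        · exact absurd rfl h2
    have hy1 : y ≠ a := fun h => ha (h ▸ H.mem_support.2 ⟨x, hH.symm⟩)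
    have hy2 : y ≠ b := fun h => hb (h ▸ H.mem_support.2 ⟨x, hH.symm⟩)
    obtain ⟨hr, hz1, hz2⟩ := ih hy1 hy2
    exact ⟨(SimpleGraph.Adj.reachable hH).trans hr, hz1, hz2⟩

lemma walk_stay_ab {H : SimpleGraph ℕ} {a b : ℕ} (ha : a ∉ H.support) (hb : b ∉ H.support) :
    ∀ {u v : ℕ}, (H ⊔ K2 a b).Walk u v → (u = a ∨ u = b) → (v = a ∨ v = b) := by
  intro u v p
  induction p with
  | nil => exact id
  | @cons x y z hadj p ih =>
    intro h1
    have hy : y = a ∨ y = b := by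
      rcases hadj with h | h
      · exfalso
        rcases h1 with rfl | rfl
        · exact ha (H.mem_support.2 ⟨y, h⟩)
        · exact hb (H.mem_support.2 ⟨y, h⟩)
      · rcases h.2 with ⟨_, rfl⟩ | ⟨_, rfl⟩ <;> tauto
    exact ih hy

lemma club_sup_K2 {H : SimpleGraph ℕ} {a b : ℕ} (hab : a ≠ b)
    (ha : a ∉ H.support) (hb : b ∉ H.support) (hclub : Is2ClubGraph H) :
    Is2ClubGraph (H ⊔ K2 a b) := by
  intro u v hr
  obtain ⟨p⟩ := hr
  by_cases hu : u = a ∨ u = b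
  · have hv := walk_stay_ab ha hb p hu
    by_cases huv : u = v
    · subst huv; simp [SimpleGraph.dist_self]
    · have hadj : (H ⊔ K2 a b).Adj u v := by
        right
        refine ⟨huv, ?_⟩
        rcases hu with rfl | rfl <;> rcases hv with rfl | rfl <;> tauto
      calc (H ⊔ K2 a b).dist u v ≤ (SimpleGraph.Walk.cons hadj SimpleGraph.Walk.nil).length :=
            SimpleGraph.dist_le _
        _ ≤ 2 := by simp
  · push_neg at hu
    obtain ⟨hrH, _, _⟩ := walk_stay ha hb p hu.1 hu.2
    obtain ⟨q, hq⟩ := hrH.exists_walk_length_eq_dist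
    calc (H ⊔ K2 a b).dist u v ≤ (q.mapLe le_sup_left).length := SimpleGraph.dist_le _
      _ = q.length := SimpleGraph.Walk.length_map _ _
      _ ≤ 2 := by rw [hq]; exact hclub u v hrH

/-- Main simulation lemma -/
lemma main_lem : ∀ (l : List Op) (G H : SimpleGraph ℕ), G.support.Finite → OpsApply l G H →
    ∀ F : Finset ℕ, ∃ (l' : List Op) (H' : SimpleGraph ℕ),
      (∀ o ∈ l', IsSplitOp o) ∧ l'.length ≤ 2 * l.length ∧ OpsApply l' G H' ∧
      (Is2ClubGraph H → Is2ClubGraph H') ∧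
      (∀ x ∈ vertsL l', x ∈ G.support ∨ x ∈ vertsL l ∨ x ∉ F) := by
  intro l
  induction l with
  | nil =>
    intro G H _ h F
    cases h
    exact ⟨[], G, by simp, by simp [vertsL], rfl, id, by simp [vertsL]⟩
  | cons o l ih =>
    intro G H hfin h F
    obtain ⟨G', ho, hl⟩ := h
    cases o with
    | split v v' =>
      have hfin' : G'.support.Finite :=
        Set.Finite.subset (hfin.union ((Set.finite_singleton v').insert v)) (split_support ho)
      obtain ⟨l'', H', hsp, hlen, happ, hclub, hverts⟩ := ih G' H hfin' hl F
      refine ⟨Op.split v v' :: l'', H', ?_, ?_, ⟨G', ho, happ⟩, hclub, ?_⟩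
      · intro o' ho'
        rcases List.mem_cons.1 ho' with rfl | h'
        · trivial
        · exact hsp o' h'
      · simp only [List.length_cons]; omega
      · intro x hx
        simp only [vertsL, Finset.mem_union] at hx
        rcases hx with hx | hx
        · right; left; simp [vertsL, Finset.mem_union]; left; exact hx
        · rcases hverts x hx with h' | h' | h'
          · rcases split_support ho h' with h'' | h''
            · exact Or.inl h''
            · right; left
              simp only [Set.mem_insert_iff, Set.mem_singleton_iff] at h''
              simp only [vertsL, opVerts, Finset.mem_union, Finset.mem_insert,
                Finset.mem_singleton]
              tauto
          · right; left; simp [vertsL, Finset.mem_union]; right; exact h'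
          · right; right; exact h'
    | del u v =>
      obtain ⟨hadj, rfl⟩ := ho
      set A : Finset ℕ := hfin.toFinset ∪ vertsL (Op.del u v :: l) ∪ F with hA
      obtain ⟨a, haA⟩ := Infinite.exists_notMem_finset A
      obtain ⟨b, hbA'⟩ := Infinite.exists_notMem_finset (insert a A)
      have hbA : b ∉ A := fun h => hbA' (Finset.mem_insert_of_mem h)
      have hab : a ≠ b := fun h => hbA' (h ▸ Finset.mem_insert_self a A)
      have hGA : ∀ x ∈ G.support, x ∈ A := by
        intro x hx
        exact Finset.mem_union_left _ (Finset.mem_union_left _ (hfin.mem_toFinset.2 hx))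
      have huA : u ∈ A := by
        apply Finset.mem_union_left _ (Finset.mem_union_right _ _)
        simp [vertsL, opVerts]
      have hvA : v ∈ A := by
        apply Finset.mem_union_left _ (Finset.mem_union_right _ _)
        simp [vertsL, opVerts]
      have haG : a ∉ G.support := fun h => haA (hGA a h)
      have hbG : b ∉ G.support := fun h => hbA (hGA b h)
      have hua : u ≠ a := fun h => haA (h ▸ huA)
      have hub : u ≠ b := fun h => hbA (h ▸ huA)
      have hva : v ≠ a := fun h => haA (h ▸ hvA)
      have hvb : v ≠ b := fun h => hbA (h ▸ hvA)
      have huv : u ≠ v := hadj.ne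
      -- intermediate graphs
      let G₁ : SimpleGraph ℕ :=
        { Adj := fun x y => (G.Adj x y ∧ s(x, y) ≠ s(u, v)) ∨ (x = u ∧ y = b) ∨ (x = b ∧ y = u)
          symm := ⟨by
            rintro x y (⟨h1, h2⟩ | ⟨rfl, rfl⟩ | ⟨rfl, rfl⟩)
            · exact Or.inl ⟨h1.symm, by rwa [Sym2.eq_swap]⟩
            · exact Or.inr (Or.inr ⟨rfl, rfl⟩)
            · exact Or.inr (Or.inl ⟨rfl, rfl⟩)⟩
          loopless := ⟨by
            rintro x (⟨h1, _⟩ | ⟨rfl, h2⟩ | ⟨rfl, h2⟩)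
            · exact G.loopless.irrefl x h1
            · exact hub h2
            · exact hub h2.symm⟩ }
      let G₂ : SimpleGraph ℕ :=
        { Adj := fun x y => (G.Adj x y ∧ s(x, y) ≠ s(u, v)) ∨ (x = a ∧ y = b) ∨ (x = b ∧ y = a)
          symm := ⟨by
            rintro x y (⟨h1, h2⟩ | ⟨rfl, rfl⟩ | ⟨rfl, rfl⟩)
            · exact Or.inl ⟨h1.symm, by rwa [Sym2.eq_swap]⟩
            · exact Or.inr (Or.inr ⟨rfl, rfl⟩)
            · exact Or.inr (Or.inl ⟨rfl, rfl⟩)⟩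
          loopless := ⟨by
            rintro x (⟨h1, _⟩ | ⟨rfl, h2⟩ | ⟨rfl, h2⟩)
            · exact G.loopless.irrefl x h1
            · exact hab h2
            · exact hab h2.symm⟩ }
      have hsplit1 : IsSplitAt v b G G₁ := by
        refine ⟨hvb, ?_, ?_, ?_, ?_⟩
        · ext y
          simp only [SimpleGraph.mem_neighborSet, Set.mem_empty_iff_false, iff_false]
          exact not_adj_of_not_mem_support hbG y
        · rintro (⟨h1, _⟩ | ⟨h1, _⟩ | ⟨h1, _⟩)
          · exact not_adj_of_not_mem_support hbG v h1.symm
          · exact huv h1.symm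
          · exact hvb h1
        · intro x y hxv hxb hyv hyb
          constructor
          · rintro (⟨h1, _⟩ | ⟨rfl, rfl⟩ | ⟨rfl, rfl⟩)
            · exact h1
            · exact absurd rfl hyb
            · exact absurd rfl hxb
          · intro h1
            refine Or.inl ⟨h1, fun he => ?_⟩
            rcases Sym2.eq_iff.1 he with ⟨_, h2⟩ | ⟨h2, _⟩
            · exact hyv h2
            · exact hxv h2
        · intro x hxv hxb
          constructor
          · rintro ((⟨h1, _⟩ | ⟨h1, _⟩ | ⟨h1, _⟩) | (⟨h1, _⟩ | ⟨h1, _⟩ | ⟨_, rfl⟩))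
            · exact h1
            · exact absurd h1 huv.symm
            · exact absurd h1 hvb
            · exact absurd h1 (not_adj_of_not_mem_support hbG x)
            · exact absurd h1.symm hub
            · exact hadj.symm
          · intro h1
            by_cases hxu : x = u
            · exact Or.inr (Or.inr (Or.inr ⟨rfl, hxu⟩))
            · refine Or.inl (Or.inl ⟨h1, fun he => ?_⟩)
              rcases Sym2.eq_iff.1 he with ⟨h2, _⟩ | ⟨_, h2⟩
              · exact huv h2.symm
              · exact hxu h2
      have hsplit2 : IsSplitAt u a G₁ G₂ := by
        refine ⟨hua, ?_, ?_, ?_, ?_⟩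
        · ext y
          simp only [SimpleGraph.mem_neighborSet, Set.mem_empty_iff_false, iff_false]
          rintro (⟨h1, _⟩ | ⟨h1, _⟩ | ⟨h1, _⟩)
          · exact not_adj_of_not_mem_support haG y h1
          · exact hua h1.symm
          · exact hab h1
        · rintro (⟨h1, _⟩ | ⟨_, h1⟩ | ⟨h1, _⟩)
          · exact not_adj_of_not_mem_support' haG u h1
          · exact hab h1
          · exact hub h1
        · intro x y hxu hxa hyu hya
          constructor
          · rintro (⟨h1, h2⟩ | ⟨rfl, rfl⟩ | ⟨rfl, rfl⟩)
            · exact Or.inl ⟨h1, h2⟩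
            · exact absurd rfl hxa
            · exact absurd rfl hya
          · rintro (⟨h1, h2⟩ | ⟨rfl, rfl⟩ | ⟨rfl, rfl⟩)
            · exact Or.inl ⟨h1, h2⟩
            · exact absurd rfl hxu
            · exact absurd rfl hyu
        · intro x hxu hxa
          constructor
          · rintro ((⟨h1, h2⟩ | ⟨h1, _⟩ | ⟨h1, _⟩) | (⟨h1, _⟩ | ⟨_, rfl⟩ | ⟨h1, _⟩))
            · exact Or.inl ⟨h1, h2⟩
            · exact absurd h1 hua
            · exact absurd h1 hub
            · exact absurd h1 (not_adj_of_not_mem_support haG x)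
            · exact Or.inr (Or.inl ⟨rfl, rfl⟩)
            · exact absurd h1 hab
          · rintro (⟨h1, h2⟩ | ⟨-, rfl⟩ | ⟨h1, -⟩)
            · exact Or.inl (Or.inl ⟨h1, h2⟩)
            · exact Or.inr (Or.inr (Or.inl ⟨rfl, rfl⟩))
            · exact absurd h1 hub
      have hG2 : G₂ = G.deleteEdges {s(u, v)} ⊔ K2 a b := by
        ext x y
        simp only [SimpleGraph.sup_adj, SimpleGraph.deleteEdges_adj, Set.mem_singleton_iff, K2]
        constructor
        · rintro (⟨h1, h2⟩ | ⟨rfl, rfl⟩ | ⟨rfl, rfl⟩)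
          · exact Or.inl ⟨h1, h2⟩
          · exact Or.inr ⟨hab, Or.inl ⟨rfl, rfl⟩⟩
          · exact Or.inr ⟨hab.symm, Or.inr ⟨rfl, rfl⟩⟩
        · rintro (⟨h1, h2⟩ | ⟨_, h3 | h3⟩)
          · exact Or.inl ⟨h1, h2⟩
          · exact Or.inr (Or.inl h3)
          · exact Or.inr (Or.inr h3)
      have hfin' : (G.deleteEdges {s(u, v)}).support.Finite :=
        hfin.subset (SimpleGraph.support_mono (SimpleGraph.deleteEdges_le _))
      obtain ⟨l'', H'', hsp, hlen, happ, hclub2, hverts⟩ :=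
        ih (G.deleteEdges {s(u, v)}) H hfin' hl (A ∪ {a, b})
      have hGdelA : ∀ x ∈ (G.deleteEdges {s(u, v)}).support, x ∈ A := fun x hx =>
        hGA x (SimpleGraph.support_mono (SimpleGraph.deleteEdges_le _) hx)
      have hlA : ∀ x ∈ vertsL l, x ∈ A := by
        intro x hx
        apply Finset.mem_union_left _ (Finset.mem_union_right _ _)
        simp only [vertsL, Finset.mem_union]
        exact Or.inr hx
      have havl : a ∉ vertsL l'' := by
        intro h
        rcases hverts a h with h' | h' | h'
        · exact haA (hGdelA a h')
        · exact haA (hlA a h')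
        · exact h' (Finset.mem_union_right _ (by simp))
      have hbvl : b ∉ vertsL l'' := by
        intro h
        rcases hverts b h with h' | h' | h'
        · exact hbA (hGdelA b h')
        · exact hbA (hlA b h')
        · exact h' (Finset.mem_union_right _ (by simp))
      have hK : ∀ x ∈ (K2 a b).support, x ∉ (G.deleteEdges {s(u, v)}).support ∧ x ∉ vertsL l'' := by
        intro x hx
        rcases K2_support hx with rfl | rfl
        · exact ⟨fun h => haA (hGdelA x h), havl⟩
        · exact ⟨fun h => hbA (hGdelA x h), hbvl⟩
      have hlift := opsApply_lift l'' _ H'' (K2 a b) happ hK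
      rw [← hG2] at hlift
      have haH : a ∉ H''.support := by
        intro h
        rcases opsApply_support l'' _ H'' happ h with h' | h'
        · exact haA (hGdelA a h')
        · exact havl h'
      have hbH : b ∉ H''.support := by
        intro h
        rcases opsApply_support l'' _ H'' happ h with h' | h'
        · exact hbA (hGdelA b h')
        · exact hbvl h'
      refine ⟨Op.split v b :: Op.split u a :: l'', H'' ⊔ K2 a b, ?_, ?_, ?_, ?_, ?_⟩
      · intro o' ho'
        rcases List.mem_cons.1 ho' with rfl | ho'
        · trivial
        rcases List.mem_cons.1 ho' with rfl | ho'
        · trivial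
        · exact hsp o' ho'
      · simp only [List.length_cons]; omega
      · exact ⟨G₁, hsplit1, G₂, hsplit2, hlift⟩
      · intro hH
        exact club_sup_K2 hab haH hbH (hclub2 hH)
      · intro x hx
        simp only [vertsL, opVerts, Finset.mem_union, Finset.mem_insert, Finset.mem_singleton] at hx
        rcases hx with (rfl | rfl) | (rfl | rfl) | hx
        · right; left; simp [vertsL, opVerts]
        · right; right; exact fun h => hbA (Finset.mem_union_right _ h)
        · right; left; simp [vertsL, opVerts]
        · right; right; exact fun h => haA (Finset.mem_union_right _ h)
        · rcases hverts x hx with h' | h' | h'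
          · exact Or.inl (SimpleGraph.support_mono (SimpleGraph.deleteEdges_le _) h')
          · right; left
            simp only [vertsL, Finset.mem_union]
            exact Or.inr h'
          · right; right
            intro hF
            exact h' (Finset.mem_union_left _ (Finset.mem_union_right _ hF))

theorem stmt15 (G : SimpleGraph ℕ) (hfin : G.support.Finite) :
    twoCcedvs G ≤ twoCcvs G ∧ twoCcvs G ≤ 2 * twoCcedvs G := by
  set Sed := {k | ∃ l H, l.length = k ∧ OpsApply l G H ∧ Is2ClubGraph H} with hSed
  set Ssp := {k | ∃ l H, l.length = k ∧ (∀ o ∈ l, IsSplitOp o) ∧ OpsApply l G H ∧ Is2ClubGraph H}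
    with hSsp
  have hsub : Ssp ⊆ Sed := by
    rintro k ⟨l, H, h1, _, h3, h4⟩
    exact ⟨l, H, h1, h3, h4⟩
  by_cases hEd : Sed.Nonempty
  · obtain ⟨l, H, hlen, happly, hclub⟩ := Nat.sInf_mem hEd
    obtain ⟨l', H', hsp, hlen', happ', hclub', -⟩ := main_lem l G H hfin happly ∅
    have hmem : l'.length ∈ Ssp := ⟨l', H', rfl, hsp, happ', hclub' hclub⟩
    have h2 : twoCcvs G ≤ 2 * twoCcedvs G := by
      have := Nat.sInf_le hmem
      have heq : twoCcedvs G = l.length := hlen.symm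
      calc twoCcvs G ≤ l'.length := this
        _ ≤ 2 * l.length := hlen'
        _ = 2 * twoCcedvs G := by rw [heq]
    refine ⟨?_, h2⟩
    have hspNE : Ssp.Nonempty := ⟨_, hmem⟩
    exact Nat.sInf_le (hsub (Nat.sInf_mem hspNE))
  · have hspE : Ssp = ∅ := by
      rw [Set.eq_empty_iff_forall_notMem]
      intro k hk
      exact hEd ⟨k, hsub hk⟩
    rw [Set.not_nonempty_iff_eq_empty] at hEd
    unfold twoCcedvs twoCcvs
    rw [← hSed, ← hSsp, hEd, hspE, Nat.sInf_empty]
    simp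
end

section
/- Any sequence of edge deletions and vertex splits turning a graph G into a disjoint union of 2-clubs can be reordered so that all edge deletions are performed before all vertex splits, without changing the total number of operations or the final graph. -/
open SimpleGraph

section Aux

private lemma sym2_ne_left {p q c d : ℕ} (h1 : p ≠ c) (h2 : p ≠ d) : s(p,q) ≠ s(c,d) := by
  intro h; rcases Sym2.eq_iff.mp h with ⟨h,_⟩|⟨h,_⟩; exacts [h1 h, h2 h]

private lemma sym2_ne2 {p q c d : ℕ} (h1 : p ≠ c) (h2 : q ≠ c) : s(p,q) ≠ s(c,d) := by
  intro h; rcases Sym2.eq_iff.mp h with ⟨h,_⟩|⟨_,h⟩; exacts [h1 h, h2 h]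

private lemma sym2_ne_right {p q c d : ℕ} (h1 : p ≠ d) (h2 : q ≠ d) : s(p,q) ≠ s(c,d) := by
  intro h; rcases Sym2.eq_iff.mp h with ⟨_,h⟩|⟨h,_⟩; exacts [h2 h, h1 h]

private lemma no_adj {G : SimpleGraph ℕ} {v' : ℕ} (h : G.neighborSet v' = ∅) (z : ℕ) :
    ¬ G.Adj v' z := fun ha => Set.eq_empty_iff_forall_notMem.mp h z ha

private lemma delAdj {G : SimpleGraph ℕ} {e : Sym2 ℕ} {p q : ℕ} (h : s(p,q) ≠ e) :
    (G.deleteEdges {e}).Adj p q ↔ G.Adj p q := by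
  rw [SimpleGraph.deleteEdges_adj]; simp [h]

private lemma delAdj_self {G : SimpleGraph ℕ} {p q : ℕ} :
    ¬ (G.deleteEdges {s(p,q)}).Adj p q := by
  rw [SimpleGraph.deleteEdges_adj]; simp

private lemma del_iso {G : SimpleGraph ℕ} {v' : ℕ} (hiso : G.neighborSet v' = ∅)
    (e : Sym2 ℕ) : (G.deleteEdges {e}).neighborSet v' = ∅ := by
  ext z
  simp only [SimpleGraph.mem_neighborSet, SimpleGraph.deleteEdges_adj,
    Set.mem_empty_iff_false, iff_false]
  exact fun h => no_adj hiso z h.1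

private lemma caseB {v v' a x : ℕ} {G G' : SimpleGraph ℕ} (hs : IsSplitAt v v' G G')
    (ha : a = v ∨ a = v') (hx1 : x ≠ v) (hx2 : x ≠ v') (hadj : G'.Adj a x) :
    (∃ p q, G.Adj p q ∧
        IsSplitAt v v' (G.deleteEdges {s(p,q)}) (G'.deleteEdges {s(a,x)})) ∨
      IsSplitAt v v' G (G'.deleteEdges {s(a,x)}) := by
  obtain ⟨hne, hiso, hnadj, hout, hcov⟩ := hs
  have hGvx : G.Adj v x := by
    refine (hcov x hx1 hx2).mp ?_
    rcases ha with rfl | rfl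
    · exact Or.inl hadj
    · exact Or.inr hadj
  rcases ha with rfl | rfl
  · -- split vertices are (a, v'), deleted edge s(a,x)
    have hvv' : s(a,v') ≠ s(a,x) := sym2_ne_right (Ne.symm hx1) (Ne.symm hx2)
    by_cases hb : G'.Adj v' x
    · -- both copies adjacent to x : the split alone produces H
      right
      refine ⟨hne, hiso, ?_, ?_, ?_⟩
      · rw [delAdj hvv']; exact hnadj
      · intro p q hp hp' hq hq'
        have h1 : s(p,q) ≠ s(a,x) := sym2_ne2 hp hq
        rw [delAdj h1]; exact hout p q hp hp' hq hq'
      · intro z hz hz'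
        have h2 : s(v',z) ≠ s(a,x) := sym2_ne_left (Ne.symm hne) (Ne.symm hx2)
        by_cases hzx : z = x
        · subst hzx
          rw [delAdj h2]
          exact ⟨fun _ => hGvx, fun _ => Or.inr hb⟩
        · have h1 : s(a,z) ≠ s(a,x) := sym2_ne_right (Ne.symm hx1) hzx
          rw [delAdj h1, delAdj h2]; exact hcov z hz hz'
    · -- only the copy a is adjacent to x : delete the original edge first
      left
      refine ⟨a, x, hGvx, hne, del_iso hiso _, ?_, ?_, ?_⟩
      · rw [delAdj hvv']; exact hnadj
      · intro p q hp hp' hq hq'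
        have h1 : s(p,q) ≠ s(a,x) := sym2_ne2 hp hq
        simp only [delAdj h1]; exact hout p q hp hp' hq hq'
      · intro z hz hz'
        have h2 : s(v',z) ≠ s(a,x) := sym2_ne_left (Ne.symm hne) (Ne.symm hx2)
        by_cases hzx : z = x
        · subst hzx
          rw [delAdj h2]
          exact ⟨fun h => h.elim (fun h => absurd h delAdj_self) (fun h => absurd h hb),
            fun h => absurd h delAdj_self⟩
        · have h1 : s(a,z) ≠ s(a,x) := sym2_ne_right (Ne.symm hx1) hzx
          simp only [delAdj h1, delAdj h2]; exact hcov z hz hz'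
  · -- split vertices are (v, a), deleted edge s(a,x)
    have hvv' : s(v,a) ≠ s(a,x) := sym2_ne_left hne (Ne.symm hx1)
    have hvx : s(v,x) ≠ s(a,x) := sym2_ne2 hne hx2
    by_cases hb : G'.Adj v x
    · right
      refine ⟨hne, hiso, ?_, ?_, ?_⟩
      · rw [delAdj hvv']; exact hnadj
      · intro p q hp hp' hq hq'
        have h1 : s(p,q) ≠ s(a,x) := sym2_ne2 hp' hq'
        rw [delAdj h1]; exact hout p q hp hp' hq hq'
      · intro z hz hz'
        by_cases hzx : z = x
        · subst hzx
          rw [delAdj hvx]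
          exact ⟨fun _ => hGvx, fun _ => Or.inl hb⟩
        · have h1 : s(v,z) ≠ s(a,x) := sym2_ne_left hne (Ne.symm hx1)
          have h2 : s(a,z) ≠ s(a,x) := sym2_ne_right (Ne.symm hx2) hzx
          rw [delAdj h1, delAdj h2]; exact hcov z hz hz'
    · left
      refine ⟨v, x, hGvx, hne, del_iso hiso _, ?_, ?_, ?_⟩
      · rw [delAdj hvv']; exact hnadj
      · intro p q hp hp' hq hq'
        have h1 : s(p,q) ≠ s(a,x) := sym2_ne2 hp' hq'
        have h1' : s(p,q) ≠ s(v,x) := sym2_ne2 hp hq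
        rw [delAdj h1, delAdj h1']; exact hout p q hp hp' hq hq'
      · intro z hz hz'
        by_cases hzx : z = x
        · subst hzx
          rw [delAdj hvx]
          exact ⟨fun h => h.elim (fun h => absurd h hb) (fun h => absurd h delAdj_self),
            fun h => absurd h delAdj_self⟩
        · have h1 : s(v,z) ≠ s(a,x) := sym2_ne_left hne (Ne.symm hx1)
          have h2 : s(a,z) ≠ s(a,x) := sym2_ne_right (Ne.symm hx2) hzx
          have h3 : s(v,z) ≠ s(v,x) := sym2_ne_right (Ne.symm hx1) hzx
          rw [delAdj h1, delAdj h2, delAdj h3]; exact hcov z hz hz'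

private lemma swap_lemma {v v' u w : ℕ} {G G' : SimpleGraph ℕ} (hs : IsSplitAt v v' G G')
    (hadj : G'.Adj u w) :
    (∃ p q, G.Adj p q ∧
        IsSplitAt v v' (G.deleteEdges {s(p,q)}) (G'.deleteEdges {s(u,w)})) ∨
      IsSplitAt v v' G (G'.deleteEdges {s(u,w)}) := by
  obtain ⟨hne, hiso, hnadj, hout, hcov⟩ := hs
  have hs' : IsSplitAt v v' G G' := ⟨hne, hiso, hnadj, hout, hcov⟩
  by_cases hu : u = v ∨ u = v'
  · have hw1 : w ≠ v := by
      rintro rfl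
      rcases hu with rfl | rfl
      · exact G'.loopless.irrefl _ hadj
      · exact hnadj hadj.symm
    have hw2 : w ≠ v' := by
      rintro rfl
      rcases hu with rfl | rfl
      · exact hnadj hadj
      · exact G'.loopless.irrefl _ hadj
    exact caseB hs' hu hw1 hw2 hadj
  · push_neg at hu
    by_cases hw : w = v ∨ w = v'
    · have h := caseB hs' hw hu.1 hu.2 hadj.symm
      rwa [Sym2.eq_swap (a := w) (b := u)] at h
    · push_neg at hw
      left
      have hGuw : G.Adj u w := (hout u w hu.1 hu.2 hw.1 hw.2).mp hadj
      have hvv' : s(v,v') ≠ s(u,w) := sym2_ne_left (Ne.symm hu.1) (Ne.symm hw.1)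
      refine ⟨u, w, hGuw, hne, del_iso hiso _, ?_, ?_, ?_⟩
      · rw [delAdj hvv']; exact hnadj
      · intro p q hp hp' hq hq'
        simp only [SimpleGraph.deleteEdges_adj, Set.mem_singleton_iff]
        rw [hout p q hp hp' hq hq']
      · intro z hz hz'
        have h1 : s(v,z) ≠ s(u,w) := sym2_ne_left (Ne.symm hu.1) (Ne.symm hw.1)
        have h2 : s(v',z) ≠ s(u,w) := sym2_ne_left (Ne.symm hu.2) (Ne.symm hw.2)
        rw [delAdj h1, delAdj h2, delAdj h1]
        exact hcov z hz hz'

private lemma opsApply_append (l1 l2 : List Op) (G H : SimpleGraph ℕ) :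
    OpsApply (l1 ++ l2) G H ↔ ∃ K, OpsApply l1 G K ∧ OpsApply l2 K H := by
  induction l1 generalizing G with
  | nil =>
    simp only [List.nil_append, OpsApply]
    constructor
    · exact fun h => ⟨G, rfl, h⟩
    · rintro ⟨K, rfl, h⟩; exact h
  | cons o l ih =>
    simp only [List.cons_append, OpsApply]
    constructor
    · rintro ⟨G', hop, h⟩
      obtain ⟨K, h1, h2⟩ := (ih G').mp h
      exact ⟨K, ⟨G', hop, h1⟩, h2⟩
    · rintro ⟨K, ⟨G', hop, h1⟩, h2⟩
      exact ⟨G', hop, (ih G').mpr ⟨K, h1, h2⟩⟩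

private lemma dels_le {l : List Op} (hd : ∀ o ∈ l, ¬ IsSplitOp o) :
    ∀ {G H : SimpleGraph ℕ}, OpsApply l G H → H ≤ G := by
  induction l with
  | nil => intro G H h; rw [show H = G from h]
  | cons o l ih =>
    intro G H h
    obtain ⟨G', hop, htail⟩ := h
    cases o with
    | split a b => exact absurd trivial (hd _ List.mem_cons_self)
    | del a b =>
      obtain ⟨_, rfl⟩ := hop
      exact le_trans (ih (fun o ho => hd o (List.mem_cons_of_mem _ ho)) htail)
        (SimpleGraph.deleteEdges_le _)

private lemma id_split {K : SimpleGraph ℕ} {v v' : ℕ} (hne : v ≠ v')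
    (hiso : K.neighborSet v' = ∅) : IsSplitAt v v' K K := by
  refine ⟨hne, hiso, fun h => no_adj hiso v h.symm, fun _ _ _ _ _ _ => Iff.rfl, ?_⟩
  intro z _ _
  have := no_adj hiso z
  tauto

private lemma bubble : ∀ (l : List Op), (∀ o ∈ l, ¬ IsSplitOp o) →
    ∀ (v v' : ℕ) (G G' H : SimpleGraph ℕ), IsSplitAt v v' G G' → OpsApply l G' H →
    ∃ d s : List Op, (∀ o ∈ d, ¬ IsSplitOp o) ∧ (∀ o ∈ s, IsSplitOp o) ∧
      d.length + s.length = l.length + 1 ∧ OpsApply (d ++ s) G H := by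
  intro l
  induction l with
  | nil =>
    intro _ v v' G G' H hs happ
    refine ⟨[], [Op.split v v'], by simp, by simp [IsSplitOp], by simp, ?_⟩
    refine ⟨H, ?_, rfl⟩
    rw [show H = G' from happ]
    exact hs
  | cons o l ih =>
    intro hd v v' G G' H hs happ
    obtain ⟨G'', hop, htail⟩ := happ
    cases o with
    | split a b => exact absurd trivial (hd _ List.mem_cons_self)
    | del a b =>
      obtain ⟨hadj, rfl⟩ := hop
      have hdl : ∀ o ∈ l, ¬ IsSplitOp o := fun o ho => hd o (List.mem_cons_of_mem _ ho)
      rcases swap_lemma hs hadj with ⟨p, q, hpq, hsp⟩ | hsp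
      · obtain ⟨d, s, hd1, hs1, hlen, happ'⟩ :=
          ih hdl v v' (G.deleteEdges {s(p,q)}) _ H hsp htail
        refine ⟨Op.del p q :: d, s, ?_, hs1, ?_, ?_⟩
        · intro o ho
          rcases List.mem_cons.mp ho with rfl | ho
          · exact fun h => h
          · exact hd1 o ho
        · simp only [List.length_cons]; omega
        · exact ⟨_, ⟨hpq, rfl⟩, happ'⟩
      · obtain ⟨d, s, hd1, hs1, hlen, happ'⟩ := ih hdl v v' G _ H hsp htail
        obtain ⟨K, hdK, hsK⟩ := (opsApply_append d s G H).mp happ'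
        have hKle : K ≤ G := dels_le hd1 hdK
        have hKiso : K.neighborSet v' = ∅ := by
          ext z
          simp only [SimpleGraph.mem_neighborSet, Set.mem_empty_iff_false, iff_false]
          exact fun h => no_adj hs.2.1 z (hKle h)
        refine ⟨d, Op.split v v' :: s, hd1, ?_, ?_, ?_⟩
        · intro o ho
          rcases List.mem_cons.mp ho with rfl | ho
          · trivial
          · exact hs1 o ho
        · simp only [List.length_cons]; omega
        · exact (opsApply_append d _ G H).mpr ⟨K, hdK, K, id_split hs.1 hKiso, hsK⟩

end Aux
theorem stmt16 (G H : SimpleGraph ℕ) (l : List Op) (happ : OpsApply l G H)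
    (h2 : Is2ClubGraph H) :
    ∃ l1 l2 : List Op, (∀ o ∈ l1, ¬ IsSplitOp o) ∧ (∀ o ∈ l2, IsSplitOp o) ∧
      (l1 ++ l2).length = l.length ∧ OpsApply (l1 ++ l2) G H := by
  clear h2
  induction l generalizing G with
  | nil => exact ⟨[], [], by simp, by simp, rfl, happ⟩
  | cons o l ih =>
    obtain ⟨G', hop, htail⟩ := happ
    obtain ⟨l1, l2, hl1, hl2, hlen, happ'⟩ := ih G' htail
    cases o with
    | del u w =>
      refine ⟨Op.del u w :: l1, l2, ?_, hl2, ?_, ⟨G', hop, happ'⟩⟩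
      · intro o ho
        rcases List.mem_cons.mp ho with rfl | ho
        · exact fun h => h
        · exact hl1 o ho
      · simp only [List.cons_append, List.length_cons] at *; omega
    | split v v' =>
      obtain ⟨K, h1, h2⟩ := (opsApply_append l1 l2 G' H).mp happ'
      obtain ⟨d, s, hd1, hs1, hlen', happ''⟩ := bubble l1 hl1 v v' G G' K hop h1
      obtain ⟨K', hdK, hsK⟩ := (opsApply_append d s G K).mp happ''
      refine ⟨d, s ++ l2, hd1, ?_, ?_, ?_⟩
      · intro o ho
        rcases List.mem_append.mp ho with ho | ho
        · exact hs1 o ho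
        · exact hl2 o ho
      · simp only [List.length_append, List.length_cons] at *; omega
      · refine (opsApply_append d (s ++ l2) G H).mpr ⟨K', hdK, ?_⟩
        exact (opsApply_append s l2 K' H).mpr ⟨K, hsK, h2⟩
end
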